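/- The determinant of the 4×4 matrix M(w,φ) with rows [−2iw, −iw e^{iφ}, −5+e^{iφ}, 4e^{iφ/2}], [−iw, −2iw e^{iφ}, −1+5e^{iφ}, −4e^{iφ/2}], [25−5e^{−iφ}, −25+5e^{iφ}, −iw(8−2cos φ), −4iw cos(φ/2)], [−20, 20e^{iφ}, −2iw(1+e^{iφ}), −16iw e^{iφ/2}] vanishes if and only if w² = 4(26 + 4cos φ ± √(474 + 448cos φ − 22cos 2φ))/(6 − 2cos φ), for real φ with cos φ ≠ 3. -/

import Mathlib

open Complex Real Matrix

set_option maxHeartbeats 4000000 in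
/-- The determinant of the 4×4 symbol matrix of the P1DG–P2 semi-discrete
one-dimensional wave equation vanishes iff `w² = 4(26 + 4cos φ ±
√(474 + 448cos φ − 22cos 2φ))/(6 − 2cos φ)`. -/
theorem det_symbol_matrix_eq_zero_iff_dispersion
    (w φ : ℝ) (hφ : Real.cos φ ≠ 3) :
    ((!![-2 * Complex.I * w, -Complex.I * w * Complex.exp (Complex.I * φ),
          -5 + Complex.exp (Complex.I * φ), 4 * Complex.exp (Complex.I * φ / 2);
        -Complex.I * w, -2 * Complex.I * w * Complex.exp (Complex.I * φ),
          -1 + 5 * Complex.exp (Complex.I * φ), -4 * Complex.exp (Complex.I * φ / 2);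
        25 - 5 * Complex.exp (-(Complex.I * φ)), -25 + 5 * Complex.exp (Complex.I * φ),
          -Complex.I * w * (8 - 2 * (Real.cos φ : ℂ)),
          -4 * Complex.I * w * (Real.cos (φ / 2) : ℂ);
        -20, 20 * Complex.exp (Complex.I * φ),
          -2 * Complex.I * w * (1 + Complex.exp (Complex.I * φ)),
          -16 * Complex.I * w * Complex.exp (Complex.I * φ / 2)] : Matrix (Fin 4) (Fin 4) ℂ).det
       = 0)
    ↔ (w ^ 2 = 4 * (26 + 4 * Real.cos φ
          + Real.sqrt (474 + 448 * Real.cos φ - 22 * Real.cos (2 * φ)))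
            / (6 - 2 * Real.cos φ)
      ∨ w ^ 2 = 4 * (26 + 4 * Real.cos φ
          - Real.sqrt (474 + 448 * Real.cos φ - 22 * Real.cos (2 * φ)))
            / (6 - 2 * Real.cos φ)) := by
  have hc1 : Real.cos φ ≤ 1 := Real.cos_le_one φ
  have hc2 : -1 ≤ Real.cos φ := Real.neg_one_le_cos φ
  set c : ℝ := Real.cos φ with hc
  have ha : (0:ℝ) < 6 - 2 * c := by linarith
  have ha' : (6:ℝ) - 2 * c ≠ 0 := ne_of_gt ha
  set E : ℂ := Complex.exp (Complex.I * φ / 2) with hE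
  have hE0 : E ≠ 0 := Complex.exp_ne_zero _
  set G : ℂ := Complex.exp (-(Complex.I * φ / 2)) with hG
  have hEF : E * G = 1 := by
    rw [hE, hG, ← Complex.exp_add]
    simp
  have hexp : Complex.exp (Complex.I * φ) = E ^ 2 := by
    rw [hE, sq, ← Complex.exp_add]
    congr 1; ring
  have hexpneg : Complex.exp (-(Complex.I * φ)) = G ^ 2 := by
    rw [hG, sq, ← Complex.exp_add]
    congr 1; ring
  have hsum1 : Complex.exp (Complex.I * φ) + Complex.exp (-(Complex.I * φ)) = 2 * (c : ℂ) := by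
    rw [show Complex.I * (φ:ℂ) = ((φ:ℝ):ℂ) * Complex.I by ring]
    rw [show -(((φ:ℝ):ℂ) * Complex.I) = ((-φ:ℝ):ℂ) * Complex.I by push_cast; ring]
    rw [Complex.exp_mul_I, Complex.exp_mul_I]
    rw [← Complex.ofReal_cos, ← Complex.ofReal_sin, ← Complex.ofReal_cos, ← Complex.ofReal_sin]
    rw [Real.cos_neg, Real.sin_neg, hc]
    push_cast; ring
  have hsum2 : E + G = 2 * ((Real.cos (φ/2) : ℝ) : ℂ) := by
    rw [hE, hG]
    rw [show Complex.I * (φ:ℂ) / 2 = ((φ/2 : ℝ):ℂ) * Complex.I by push_cast; ring]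
    rw [show -(((φ/2 : ℝ):ℂ) * Complex.I) = ((-(φ/2) : ℝ):ℂ) * Complex.I by push_cast; ring]
    rw [Complex.exp_mul_I, Complex.exp_mul_I]
    rw [← Complex.ofReal_cos, ← Complex.ofReal_sin, ← Complex.ofReal_cos, ← Complex.ofReal_sin]
    rw [Real.cos_neg, Real.sin_neg]
    push_cast; ring
  have hcos : ((c : ℝ) : ℂ) = (E ^ 2 + G ^ 2) / 2 := by
    rw [← hexp, ← hexpneg, hsum1]; ring
  have hcosh : ((Real.cos (φ/2) : ℝ) : ℂ) = (E + G) / 2 := by rw [hsum2]; ring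
  have hdet :
      (!![-2 * Complex.I * w, -Complex.I * w * Complex.exp (Complex.I * φ),
          -5 + Complex.exp (Complex.I * φ), 4 * Complex.exp (Complex.I * φ / 2);
        -Complex.I * w, -2 * Complex.I * w * Complex.exp (Complex.I * φ),
          -1 + 5 * Complex.exp (Complex.I * φ), -4 * Complex.exp (Complex.I * φ / 2);
        25 - 5 * Complex.exp (-(Complex.I * φ)), -25 + 5 * Complex.exp (Complex.I * φ),
          -Complex.I * w * (8 - 2 * (c : ℂ)),
          -4 * Complex.I * w * (Real.cos (φ / 2) : ℂ);
        -20, 20 * Complex.exp (Complex.I * φ),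
          -2 * Complex.I * w * (1 + Complex.exp (Complex.I * φ)),
          -16 * Complex.I * w * Complex.exp (Complex.I * φ / 2)] :
            Matrix (Fin 4) (Fin 4) ℂ).det
        = -60 * E ^ 3 * (((2 * c - 6) * w ^ 4 + (208 + 32 * c) * w ^ 2
            + 480 * (c - 1) : ℝ) : ℂ) := by
    simp [Matrix.det_succ_row_zero, Fin.sum_univ_succ, Fin.succAbove,
      Matrix.submatrix_apply,
      show Fin.castSucc (0 : Fin 3) = 0 from rfl, show Fin.castSucc (1 : Fin 3) = 1 from rfl,
      show Fin.castSucc (2 : Fin 3) = 2 from rfl, show Fin.castSucc (0 : Fin 2) = 0 from rfl,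
      show Fin.castSucc (1 : Fin 2) = 1 from rfl, show Fin.castSucc (0 : Fin 1) = 0 from rfl,
      show Fin.succ (0 : Fin 2) = 1 from rfl, show Fin.succ (1 : Fin 2) = 2 from rfl,
      show Fin.succ (0 : Fin 1) = 1 from rfl, show Fin.succ (2 : Fin 3) = 3 from rfl,
      show Fin.succ (1 : Fin 3) = 2 from rfl, show Fin.succ (0 : Fin 3) = 1 from rfl]
    have hcosh' : Complex.cos ((φ:ℂ)/2) = (E + G) / 2 := by
      rw [show ((φ:ℂ)/2) = ((φ/2 : ℝ):ℂ) by push_cast; ring, ← Complex.ofReal_cos, hcosh]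
    rw [hexp, hexpneg, hcos, show Complex.exp (Complex.I * (φ:ℂ) / 2) = E from hE.symm, hcosh']
    push_cast
    linear_combination ((12000:ℂ) * E + (1800:ℂ) * E * (w:ℂ)^2 + (12000:ℂ) * E^2 * G + (2280:ℂ) * E^2 * G * (w:ℂ)^2 + (12:ℂ) * E^2 * G * (w:ℂ)^4 + (2400:ℂ) * E^3 + (-120:ℂ) * E^3 * (w:ℂ)^2 + (-12:ℂ) * E^3 * (w:ℂ)^4 + (2400:ℂ) * E^4 * G + (360:ℂ) * E^4 * G * (w:ℂ)^2) * hEF + ((1800:ℂ) * E * (w:ℂ)^2 + (480:ℂ) * E^2 * G * (w:ℂ)^2 + (12:ℂ) * E^2 * G * (w:ℂ)^4 + (-12:ℂ) * E^2 * G * Complex.I^2 * (w:ℂ)^4 + (12360:ℂ) * E^3 * (w:ℂ)^2 + (-372:ℂ) * E^3 * (w:ℂ)^4 + (372:ℂ) * E^3 * Complex.I^2 * (w:ℂ)^4 + (-1320:ℂ) * E^3 * G^2 * (w:ℂ)^2 + (48:ℂ) * E^3 * G^2 * (w:ℂ)^4 + (-48:ℂ) * E^3 * G^2 * Complex.I^2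 * (w:ℂ)^4 + (480:ℂ) * E^4 * G * (w:ℂ)^2 + (12:ℂ) * E^4 * G * (w:ℂ)^4 + (-12:ℂ) * E^4 * G * Complex.I^2 * (w:ℂ)^4 + (960:ℂ) * E^5 * (w:ℂ)^2 + (60:ℂ) * E^5 * (w:ℂ)^4 + (-60:ℂ) * E^5 * Complex.I^2 * (w:ℂ)^4 + (-360:ℂ) * E^5 * G^2 * (w:ℂ)^2) * Complex.I_sq
  rw [hdet]
  have hstep : -60 * E ^ 3 * (((2 * c - 6) * w ^ 4 + (208 + 32 * c) * w ^ 2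
      + 480 * (c - 1) : ℝ) : ℂ) = 0
      ↔ (2 * c - 6) * w ^ 4 + (208 + 32 * c) * w ^ 2 + 480 * (c - 1) = 0 := by
    rw [mul_eq_zero, mul_eq_zero]
    simp only [Complex.ofReal_eq_zero]
    constructor
    · rintro ((h | h) | h)
      · norm_num at h
      · exact absurd h (pow_ne_zero _ hE0)
      · exact h
    · exact fun h => Or.inr h
  rw [hstep]
  -- now the real quadratic analysis
  rw [Real.cos_two_mul]
  rw [← hc]
  set D : ℝ := 474 + 448 * c - 22 * (2 * c ^ 2 - 1) with hD
  have hD0 : 0 ≤ D := by nlinarith [sq_nonneg (1 - c), sq_nonneg (1 + c)]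
  set s : ℝ := Real.sqrt D with hs
  have hs2 : s ^ 2 = D := Real.sq_sqrt hD0
  have hprod : ((6 - 2*c) * w^2 - 4*(26 + 4*c + s)) * ((6 - 2*c) * w^2 - 4*(26 + 4*c - s))
      = -(6 - 2*c) * ((2 * c - 6) * w ^ 4 + (208 + 32 * c) * w ^ 2 + 480 * (c - 1)) := by
    linear_combination (-16 : ℝ) * hs2
  constructor
  · intro h
    have h0 : ((6 - 2*c) * w^2 - 4*(26 + 4*c + s)) * ((6 - 2*c) * w^2 - 4*(26 + 4*c - s)) = 0 := by
      rw [hprod, h, mul_zero]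
    rcases mul_eq_zero.mp h0 with h' | h'
    · left
      rw [eq_div_iff ha']
      linear_combination h'
    · right
      rw [eq_div_iff ha']
      linear_combination h' 
  · intro h
    have h0 : ((6 - 2*c) * w^2 - 4*(26 + 4*c + s)) * ((6 - 2*c) * w^2 - 4*(26 + 4*c - s)) = 0 := by
      rcases h with h | h
      · have : (6 - 2*c) * w^2 = 4*(26 + 4*c + s) := by
          rw [h]; field_simp
        rw [this]; ring
      · have : (6 - 2*c) * w^2 = 4*(26 + 4*c - s) := by
          rw [h]; field_simp
        rw [this]; ring
    have := hprod ▸ h0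
    have hne : -(6 - 2*c) ≠ 0 := neg_ne_zero.mpr ha'
    exact (mul_eq_zero.mp this).resolve_left hne
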